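/- Let X be a finite nonempty set and let α, β ∈ P(X). Then α ~c β in P(X) if and only if cs(α) = cs(β) and s(α) = s(β). -/

import Mathlib

namespace ConjPaper

open Classical

/-- Partial transformations of `X`. -/
abbrev PT (X : Type*) := X → Option X

variable {X : Type*}

/-- Left-to-right composition: `x(αφ) = (xα)φ`. -/
def pcomp (α φ : PT X) : PT X := fun x => (α x).bind φ

/-- The zero of `P(X)`: the empty transformation. -/
def pzero : PT X := fun _ => none

/-- The identity of `P(X)`. -/
def pid : PT X := fun x => some x

/-- The domain of a partial transformation. -/
def pdom (α : PT X) : Set X := {x | α x ≠ none}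

/-- The image of a partial transformation. -/
def pim (α : PT X) : Set X := {y | ∃ x, α x = some y}

/-- The span: `dom(α) ∪ im(α)`. -/
def pspan (α : PT X) : Set X := pdom α ∪ pim α

/-- Iterates `γ^k` of a partial transformation (`γ^0 = id`). -/
def pit (α : PT X) : ℕ → PT X
  | 0 => pid
  | n + 1 => pcomp (pit α n) α

/-- `φ` is a restrictive partial homomorphism (rp-homomorphism) from `Γ(α)` to `Γ(β)`:
(a) every arc `x → y` of `Γ(α)` has `x, y ∈ dom(φ)` and `xφ → yφ` an arc of `Γ(β)`;
(b) if `x` is terminal in `Γ(α)` and `x ∈ dom(φ)`, then `xφ` is terminal in `Γ(β)`. -/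
def IsRpHom (α β φ : PT X) : Prop :=
  (∀ x y, α x = some y →
    ∃ x' y', φ x = some x' ∧ φ y = some y' ∧ β x' = some y') ∧
  (∀ x x', α x = none → φ x = some x' → β x' = none)

/-- `𝔓¹(α)` for the monoid `P(X)` itself: for `α ≠ 0`,
`𝔓(α) = {g : ∀ μ ∈ P(X) ∪ {id}, μα ≠ 0 → (μα)g ≠ 0}` together with `id_X`;
and `𝔓¹(0) = {0, id_X}`. -/
noncomputable def Pfrak1P (α : PT X) : Set (PT X) :=
  (if α = pzero then {pzero}
   else {g | ∀ μ : PT X, pcomp μ α ≠ pzero → pcomp (pcomp μ α) g ≠ pzero}) ∪ {pid}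

/-- Conjugacy `α ~c β` in `P(X)`. -/
def ConjP (α β : PT X) : Prop :=
  ∃ φ ∈ Pfrak1P α, ∃ ψ ∈ Pfrak1P β,
    pcomp α φ = pcomp φ β ∧ pcomp β ψ = pcomp ψ α

/-- `γ` has a cycle of length `k ≥ 1`. -/
def HasCycle (γ : PT X) (k : ℕ) : Prop :=
  1 ≤ k ∧ ∃ x, pit γ k x = some x ∧ ∀ i, 1 ≤ i → i < k → pit γ i x ≠ some x

/-- `γ` has a cycle (of some length). -/
def HasCycleAny (γ : PT X) : Prop := ∃ k, HasCycle γ k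

/-- The set `M(α)` of lengths of cycles of `α`. -/
def Mset (α : PT X) : Set ℕ := {n | HasCycle α n}

/-- The cycle set `cs(α)`: the divisibility-minimal elements of `M(α)`. -/
def cs (α : PT X) : Set ℕ := {n ∈ Mset α | ∀ m ∈ Mset α, m ∣ n → m = n}

/-- The equivalence used for connected components:
`x ~ y` iff `xα^k = yα^m` (both defined) for some `k, m ≥ 0`. -/
def relP (α : PT X) (x y : X) : Prop :=
  ∃ k m z, pit α k x = some z ∧ pit α m y = some z

/-- `γ` is a connected component of `α`: the restriction of `α` to the `~`-class
(within `dom(α)`) of some `x₀ ∈ dom(α)`. -/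
def IsComponent (α γ : PT X) : Prop :=
  ∃ x0, α x0 ≠ none ∧
    (∀ t, α t ≠ none → relP α t x0 → γ t = α t) ∧
    (∀ t, ¬(α t ≠ none ∧ relP α t x0) → γ t = none)

/-- The ordinal rank `ρ_γ(x)` with respect to `R_γ = {(y, x) : yγ = x}`
(value `0` if `R_γ` is not well founded, which does not occur in the intended uses). -/
noncomputable def prank (γ : PT X) (x : X) : Ordinal :=
  if h : WellFounded (fun y z : X => γ y = some z) then (h.apply x).rank else 0

/-- `s(α)`: the supremum of the ranks of the roots (unique terminal vertices) of the
cycle-free connected components of `α` (`0` if there are none). -/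
noncomputable def sVal (α : PT X) : Ordinal :=
  sSup {o : Ordinal | ∃ γ : PT X, IsComponent α γ ∧ ¬HasCycleAny γ ∧
    ∃ x0 ∈ pspan γ, γ x0 = none ∧ o = prank γ x0}

-- basic pit lemmas
@[simp] theorem pit_zero (α : PT X) (x : X) : pit α 0 x = some x := rfl

theorem pit_succ (α : PT X) (n : ℕ) (x : X) :
    pit α (n+1) x = (pit α n x).bind α := rfl

theorem pit_one (α : PT X) (x : X) : pit α 1 x = α x := by
  simp [pit_succ, pit_zero, Option.bind]

theorem pit_add (α : PT X) (a b : ℕ) (x : X) :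
    pit α (a+b) x = (pit α a x).bind (pit α b) := by
  induction b with
  | zero => cases h : pit α a x <;> simp [pit, pid, Option.bind, h]
  | succ b ih =>
      rw [show a + (b+1) = (a+b)+1 from rfl, pit_succ, ih]
      cases h : pit α a x <;> simp [Option.bind, pit_succ, h]

theorem pit_succ' (α : PT X) (n : ℕ) (x : X) :
    pit α (n+1) x = (α x).bind (pit α n) := by
  rw [show n + 1 = 1 + n by omega, pit_add, pit_one]

theorem pit_add_some {α : PT X} {a b : ℕ} {x z : X} (h : pit α a x = some z) :
    pit α (a+b) x = pit α b z := by
  rw [pit_add, h]; rfl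

theorem pit_defined_of_le {α : PT X} {a b : ℕ} {x : X} (hab : a ≤ b)
    (h : pit α b x ≠ none) : pit α a x ≠ none := by
  intro ha
  obtain ⟨c, rfl⟩ := Nat.exists_eq_add_of_le hab
  rw [pit_add, ha] at h; exact h rfl

theorem pit_some_exists_pre {α : PT X} {k : ℕ} {x y : X}
    (h : pit α (k+1) x = some y) : ∃ z, α z = some y := by
  rw [pit_succ] at h
  cases hz : pit α k x with
  | none => rw [hz] at h; exact absurd h (by simp [Option.bind])
  | some z => rw [hz] at h; exact ⟨z, h⟩

-- periodic points
def Periodic (α : PT X) (x : X) : Prop := ∃ p, 1 ≤ p ∧ pit α p x = some x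

theorem periodic_mul {α : PT X} {p : ℕ} {x : X} (h : pit α p x = some x) (q : ℕ) :
    pit α (p*q) x = some x := by
  induction q with
  | zero => simp
  | succ q ih =>
      rw [show p*(q+1) = p*q + p from by ring, pit_add_some ih, h]

theorem periodic_all_defined {α : PT X} {x : X} (h : Periodic α x) (t : ℕ) :
    pit α t x ≠ none := by
  obtain ⟨p, hp1, hp⟩ := h
  have h2 : pit α (p*t) x = some x := periodic_mul hp t
  exact pit_defined_of_le (Nat.le_mul_of_pos_left t hp1) (by rw [h2]; simp)

theorem periodic_of_forward {α : PT X} {x z : X} (h : Periodic α x) {k : ℕ}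
    (hz : pit α k x = some z) : Periodic α z := by
  obtain ⟨p, hp1, hp⟩ := h
  refine ⟨p, hp1, ?_⟩
  -- z = x α^k ; z α^p = x α^{k+p} = x α^{p+k} = z
  have h1 : pit α (k + p) x = pit α p z := pit_add_some hz
  have h2 : pit α (p + k) x = pit α k x := by rw [pit_add_some hp]
  rw [← h1, show k + p = p + k by ring, h2, hz]

-- minimal period machinery
theorem exists_min_period {α : PT X} {x : X} {n : ℕ} (hn : 1 ≤ n)
    (h : pit α n x = some x) :
    ∃ m, (1 ≤ m ∧ pit α m x = some x ∧ ∀ i, 1 ≤ i → i < m → pit α i x ≠ some x)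
      ∧ m ∣ n := by
  have hex : ∃ m, 1 ≤ m ∧ pit α m x = some x := ⟨n, hn, h⟩
  classical
  let m := Nat.find hex
  obtain ⟨hm1, hm⟩ := Nat.find_spec hex
  have hmin : ∀ i, 1 ≤ i → i < m → pit α i x ≠ some x := by
    intro i hi1 him hix
    exact absurd (⟨hi1, hix⟩ : 1 ≤ i ∧ pit α i x = some x) (Nat.find_min hex him)
  refine ⟨m, ⟨hm1, hm, hmin⟩, ?_⟩
  -- division
  have := Nat.div_add_mod n m
  set q := n / m; set r := n % m
  have hr : r < m := Nat.mod_lt _ (by omega)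
  have h1 : pit α (m*q) x = some x := periodic_mul hm q
  have h2 : pit α (m*q + r) x = some x := by rw [this]; exact h
  rw [pit_add_some h1] at h2
  by_contra hdvd
  have hr1 : 1 ≤ r := by
    rcases Nat.eq_zero_or_pos r with h0 | h0
    · exact absurd (Nat.dvd_of_mod_eq_zero h0) hdvd
    · omega
  exact hmin r hr1 hr h2

theorem dvd_of_min_period {α : PT X} {x : X} {m n : ℕ}
    (hm1 : 1 ≤ m) (hm : pit α m x = some x)
    (hmin : ∀ i, 1 ≤ i → i < m → pit α i x ≠ some x)
    (hn1 : 1 ≤ n) (hn : pit α n x = some x) : m ∣ n := by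
  obtain ⟨m', ⟨hm'1, hm', hmin'⟩, hdvd⟩ := exists_min_period hn1 hn
  have : ¬ m' < m := fun hlt => hmin m' hm'1 hlt hm'
  have : ¬ m < m' := fun hlt => hmin' m hm1 hlt hm
  have : m = m' := by omega
  rwa [this]

----------------------------------------------------------------
-- relP lemmas
----------------------------------------------------------------

theorem relP_refl (α : PT X) (x : X) : relP α x x := ⟨0, 0, x, rfl, rfl⟩

theorem relP_symm {α : PT X} {x y : X} (h : relP α x y) : relP α y x := by
  obtain ⟨k, m, z, h1, h2⟩ := h; exact ⟨m, k, z, h2, h1⟩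

theorem pit_compare {α : PT X} {k k' : ℕ} {x z z' : X} (hkk : k ≤ k')
    (h : pit α k x = some z) (h' : pit α k' x = some z') :
    pit α (k' - k) z = some z' := by
  obtain ⟨c, rfl⟩ := Nat.exists_eq_add_of_le hkk
  rw [pit_add_some h] at h'
  simpa using h'

theorem relP_trans {α : PT X} {x y u : X} (h1 : relP α x y) (h2 : relP α y u) :
    relP α x u := by
  obtain ⟨k, m, z, hk, hm⟩ := h1
  obtain ⟨k', m', z', hk', hm'⟩ := h2
  rcases le_total m k' with hle | hle
  · -- z' = y α^{k'} = z α^{k'-m}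
    have := pit_compare hle hm hk'
    exact ⟨k + (k' - m), m', z', by rw [pit_add_some hk]; exact this, hm'⟩
  · have := pit_compare hle hk' hm
    exact ⟨k, m' + (m - k'), z, hk, by rw [pit_add_some hm']; exact this⟩

theorem relP_of_image {α : PT X} {x x' y : X} (h : relP α x y) (hx : α x = some x') :
    relP α x' y := by
  obtain ⟨k, m, z, hk, hm⟩ := h
  cases k with
  | zero =>
      -- x = z = y α^m, so x' = y α^{m+1}
      simp [pit_zero, pid] at hk
      subst hk
      exact ⟨0, m+1, x', rfl, by rw [pit_succ, hm]; exact hx⟩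
  | succ k =>
      refine ⟨k, m, z, ?_, hm⟩
      rw [pit_succ'] at hk; rwa [hx] at hk

theorem relP_forward {α : PT X} {x z y : X} {k : ℕ} (h : relP α x y)
    (hk : pit α k x = some z) : relP α z y := by
  induction k generalizing x with
  | zero => simp [pit_zero, pid] at hk; rwa [← hk]
  | succ k ih =>
      rw [pit_succ'] at hk
      cases hx : α x with
      | none => rw [hx] at hk; exact absurd hk (by simp)
      | some x' =>
          rw [hx] at hk
          exact ih (relP_of_image h hx) hk

----------------------------------------------------------------
-- canonical components
----------------------------------------------------------------

noncomputable def comp0 (α : PT X) (x0 : X) : PT X :=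
  fun t => if α t ≠ none ∧ relP α t x0 then α t else none

theorem comp0_isComponent {α : PT X} {x0 : X} (h : α x0 ≠ none) :
    IsComponent α (comp0 α x0) := by
  refine ⟨x0, h, fun t h1 h2 => ?_, fun t h1 => ?_⟩
  · simp [comp0, h1, h2]
  · simp only [comp0, ite_eq_right_iff]
    intro hc; exact absurd hc h1

theorem component_sub {α γ : PT X} (h : IsComponent α γ) {t u : X}
    (ht : γ t = some u) : α t = some u := by
  obtain ⟨x0, hx0, h1, h2⟩ := h
  by_cases hc : α t ≠ none ∧ relP α t x0
  · rw [← h1 t hc.1 hc.2]; exact ht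
  · rw [h2 t hc] at ht; exact absurd ht (by simp)

theorem component_pit_sub {α γ : PT X} (h : IsComponent α γ) {t u : X} {k : ℕ}
    (ht : pit γ k t = some u) : pit α k t = some u := by
  induction k generalizing t with
  | zero => exact ht
  | succ k ih =>
      rw [pit_succ'] at ht ⊢
      cases hg : γ t with
      | none => rw [hg] at ht; exact absurd ht (by simp)
      | some v =>
          rw [hg] at ht
          rw [component_sub h hg]
          exact ih ht

theorem hasCycleAny_of_component {α γ : PT X} (h : IsComponent α γ)
    (hc : HasCycleAny γ) : HasCycleAny α := by
  obtain ⟨k, hk1, x, hx, _⟩ := hc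
  obtain ⟨m, hm, hdvd⟩ := exists_min_period hk1 (component_pit_sub h hx)
  exact ⟨m, hm.1, x, hm.2.1, hm.2.2⟩

-- membership: if x in the class of x0 then γ agrees with α on the whole
-- forward orbit of x.
theorem component_eq_on_class {α γ : PT X} (h : IsComponent α γ) :
    ∃ x0, α x0 ≠ none ∧ ∀ t, α t ≠ none → relP α t x0 → γ t = α t := by
  obtain ⟨x0, hx0, h1, _⟩ := h; exact ⟨x0, hx0, h1⟩

----------------------------------------------------------------
-- well-foundedness and rank
----------------------------------------------------------------

theorem pit_of_transGen {γ : PT X} {a b : X}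
    (h : Relation.TransGen (fun y z : X => γ y = some z) a b) :
    ∃ k, 1 ≤ k ∧ pit γ k a = some b := by
  induction h with
  | single h => exact ⟨1, le_refl _, by rwa [pit_one]⟩
  | tail _ h ih =>
      obtain ⟨k, hk1, hk⟩ := ih
      exact ⟨k+1, by omega, by rw [pit_succ, hk]; exact h⟩

theorem wf_of_no_cycle [Finite X] {γ : PT X} (h : ¬HasCycleAny γ) :
    WellFounded (fun y z : X => γ y = some z) := by
  have hirr : ∀ x : X, ¬ Relation.TransGen (fun y z : X => γ y = some z) x x := by
    intro x hx
    obtain ⟨k, hk1, hk⟩ := pit_of_transGen hx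
    obtain ⟨m, hm, _⟩ := exists_min_period hk1 hk
    exact h ⟨m, hm.1, x, hm.2.1, hm.2.2⟩
  have : IsIrrefl X (Relation.TransGen (fun y z : X => γ y = some z)) := ⟨hirr⟩
  have hwf : WellFounded (Relation.TransGen (fun y z : X => γ y = some z)) :=
    Finite.wellFounded_of_trans_of_irrefl _
  exact @Subrelation.wf X (Relation.TransGen (fun y z : X => γ y = some z))
    (fun y z : X => γ y = some z)
    (fun {a b} hab => Relation.TransGen.single hab) hwf

theorem prank_def {γ : PT X} (h : WellFounded (fun y z : X => γ y = some z)) (x : X) :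
    prank γ x = (h.apply x).rank := by
  rw [prank, dif_pos h]

-- a chain of length n into x forces rank ≥ n
theorem le_prank_of_chain {γ : PT X} (hwf : WellFounded (fun y z : X => γ y = some z))
    (c : ℕ → X) {n : ℕ} (hc : ∀ i, i < n → γ (c (i+1)) = some (c i)) :
    (n : Ordinal) ≤ prank γ (c 0) := by
  induction n generalizing c with
  | zero => simp
  | succ n ih =>
      have h1 : (n : Ordinal) ≤ prank γ (c 1) := by
        have := ih (fun i => c (i+1)) (fun i hi => hc (i+1) (by omega))
        exact this
      have h2 : prank γ (c 1) < prank γ (c 0) := by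
        rw [prank_def hwf, prank_def hwf]
        exact Acc.rank_lt_of_rel (hwf.apply (c 0)) (hc 0 (by omega))
      have : (n : Ordinal) < prank γ (c 0) := lt_of_le_of_lt h1 h2
      rwa [Nat.cast_succ, ← Order.succ_eq_add_one, Order.succ_le_iff]

-- rank ≥ n gives a chain of length n into x
theorem chain_of_le_prank {γ : PT X} (hwf : WellFounded (fun y z : X => γ y = some z))
    {x : X} {n : ℕ} (h : (n : Ordinal) ≤ prank γ x) :
    ∃ c : ℕ → X, c 0 = x ∧ ∀ i, i < n → γ (c (i+1)) = some (c i) := by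
  induction n generalizing x with
  | zero => exact ⟨fun _ => x, rfl, by omega⟩
  | succ n ih =>
      -- find a predecessor with rank ≥ n
      rw [prank_def hwf] at h
      rw [Acc.rank_eq] at h
      have hlt : (n : Ordinal) < ⨆ b : { b // γ b = some x },
          Order.succ ((hwf.apply x).inv b.2).rank := by
        refine lt_of_lt_of_le ?_ h
        rw [Nat.cast_succ]; exact lt_add_one _
      rw [Ordinal.lt_iSup_iff] at hlt
      obtain ⟨⟨y, hy⟩, hylt⟩ := hlt
      have hyn : (n : Ordinal) ≤ prank γ y := by
        rw [prank_def hwf]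
        rw [Order.lt_succ_iff] at hylt
        exact hylt
      obtain ⟨c, hc0, hc⟩ := ih hyn
      refine ⟨fun i => if i = 0 then x else c (i-1), by simp, ?_⟩
      intro i hi
      cases i with
      | zero => simpa [hc0] using hy
      | succ j =>
          simpa using hc j (by omega)

-- rank comparison under an option-valued graph homomorphism
theorem prank_le_of_hom {γ γ' : PT X} (hwf : WellFounded (fun y z : X => γ y = some z))
    (hwf' : WellFounded (fun y z : X => γ' y = some z)) (φ : PT X)
    (hhom : ∀ y z, γ y = some z → ∃ y' z', φ y = some y' ∧ φ z = some z' ∧ γ' y' = some z') :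
    ∀ x x', φ x = some x' → prank γ x ≤ prank γ' x' := by
  intro x
  induction x using WellFounded.induction hwf with
  | _ x ih =>
      intro x' hx'
      rw [prank_def hwf, Acc.rank_eq]
      apply Ordinal.iSup_le
      rintro ⟨y, hy⟩
      obtain ⟨y', z', hy', hz', harc⟩ := hhom y x hy
      rw [hx'] at hz'
      obtain rfl : x' = z' := by injection hz'
      have h1 : prank γ y ≤ prank γ' y' := ih y hy y' hy'
      have h2 : prank γ' y' < prank γ' x' := by
        rw [prank_def hwf', prank_def hwf']
        exact Acc.rank_lt_of_rel (hwf'.apply x') harc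
      rw [prank_def hwf] at h1
      calc Order.succ ((hwf.apply x).inv hy).rank
          ≤ Order.succ (prank γ' y') := by
            apply Order.succ_le_succ; exact h1
        _ ≤ prank γ' x' := Order.succ_le_of_lt h2

----------------------------------------------------------------
-- Pfrak1P characterization
----------------------------------------------------------------

theorem pzero_ne_iff {α : PT X} : α ≠ pzero ↔ ∃ x y, α x = some y := by
  constructor
  · intro h
    by_contra hc
    push_neg at hc
    apply h; funext x
    cases hx : α x with
    | none => rfl
    | some y => exact absurd hx (hc x y)
  · rintro ⟨x, y, hxy⟩ h
    rw [h] at hxy; exact absurd hxy (by simp [pzero])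

theorem mem_Pfrak1P_of_dom [Nonempty X] {α φ : PT X} (hα : α ≠ pzero)
    (h : ∀ y ∈ pim α, φ y ≠ none) : φ ∈ Pfrak1P α := by
  · left; rw [if_neg hα]
    intro μ hμ hc
    rw [pzero_ne_iff] at hμ
    obtain ⟨x, y, hxy⟩ := hμ
    simp only [pcomp] at hxy
    cases hm : μ x with
    | none => rw [hm] at hxy; exact absurd hxy (by simp)
    | some u =>
        rw [hm] at hxy; simp only [Option.bind] at hxy
        -- α u = some y, so y ∈ pim α
        have hy : y ∈ pim α := ⟨u, hxy⟩
        have := h y hy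
        have hx : pcomp (pcomp μ α) φ x = none := by rw [hc]; rfl
        simp only [pcomp, hm, Option.bind, hxy] at hx
        exact this hx

theorem Pfrak1P_dom [Nonempty X] {α φ : PT X} (hα : α ≠ pzero)
    (h : φ ∈ Pfrak1P α) : ∀ y ∈ pim α, φ y ≠ none := by
  rcases h with h | h
  · rw [if_neg hα] at h
    rintro y ⟨x, hxy⟩ hn
    have hμ : pcomp (fun _ : X => some x) α ≠ pzero := by
      rw [pzero_ne_iff]
      exact ⟨x, y, by simp [pcomp, Option.bind, hxy]⟩
    apply h _ hμ
    funext t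
    simp [pcomp, Option.bind, hxy, hn, pzero]
  · simp only [Set.mem_singleton_iff] at h
    subst h; intro y _; simp [pid]

----------------------------------------------------------------
-- from semiconjugacy to rp-homomorphism
----------------------------------------------------------------

theorem rpHom_of_semiconj {α β φ : PT X}
    (hdom : ∀ y ∈ pim α, φ y ≠ none)
    (heq : pcomp α φ = pcomp φ β) : IsRpHom α β φ := by
  constructor
  · intro x y hxy
    have h := congrFun heq x
    simp only [pcomp, hxy, Option.bind_some] at h
    -- h : φ y = (φ x).bind β
    have hy : φ y ≠ none := hdom y ⟨x, hxy⟩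
    cases hfy : φ y with
    | none => exact absurd hfy hy
    | some y' =>
        rw [hfy] at h
        cases hfx : φ x with
        | none => rw [hfx] at h; exact absurd h.symm (by simp)
        | some x' =>
            rw [hfx] at h
            exact ⟨x', y', rfl, rfl, h.symm⟩
  · intro x x' hx hphix
    have h := congrFun heq x
    simp only [pcomp, hx, hphix, Option.bind_some, Option.bind_none] at h
    exact h.symm

-- transfer of iterates along an rp-homomorphism
theorem rpHom_pit {α β φ : PT X} (h : IsRpHom α β φ) {k : ℕ} {x z x' : X}
    (hk : pit α k x = some z) (hx : φ x = some x') :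
    ∃ z', φ z = some z' ∧ pit β k x' = some z' := by
  induction k generalizing x x' with
  | zero =>
      simp only [pit_zero, pid] at hk
      obtain rfl : x = z := by injection hk
      exact ⟨x', hx, by simpa using hx⟩
  | succ k ih =>
      rw [pit_succ'] at hk
      cases hax : α x with
      | none => rw [hax] at hk; exact absurd hk (by simp)
      | some y =>
          rw [hax] at hk
          obtain ⟨x'', y', hx'', hy', harc⟩ := h.1 x y hax
          rw [hx] at hx''
          obtain rfl : x' = x'' := by injection hx''
          obtain ⟨z', hz', hpit⟩ := ih hk hy'
          refine ⟨z', hz', ?_⟩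
          rw [pit_succ', harc]
          exact hpit

theorem rpHom_relP {α β φ : PT X} (h : IsRpHom α β φ) {x y x' y' : X}
    (hr : relP α x y) (hx : φ x = some x') (hy : φ y = some y') :
    relP β x' y' := by
  obtain ⟨k, m, z, hk, hm⟩ := hr
  obtain ⟨z1, hz1, hp1⟩ := rpHom_pit h hk hx
  obtain ⟨z2, hz2, hp2⟩ := rpHom_pit h hm hy
  rw [hz1] at hz2
  obtain rfl : z1 = z2 := by injection hz2
  exact ⟨k, m, z1, hp1, hp2⟩

----------------------------------------------------------------
-- cycle set transfer
----------------------------------------------------------------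

theorem Mset_transfer {α β φ : PT X} (h : IsRpHom α β φ)
    (hdom : ∀ y ∈ pim α, φ y ≠ none) :
    ∀ n ∈ Mset α, ∃ m ∈ Mset β, m ∣ n := by
  rintro n ⟨hn1, x, hx, hmin⟩
  have hxim : x ∈ pim α := by
    obtain ⟨n', rfl⟩ : ∃ n', n = n' + 1 := ⟨n - 1, by omega⟩
    exact pit_some_exists_pre hx
  cases hφx : φ x with
  | none => exact absurd hφx (hdom x hxim)
  | some x' =>
      obtain ⟨z', hz', hp⟩ := rpHom_pit h hx hφx
      rw [hφx] at hz'
      obtain rfl : x' = z' := by injection hz'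
      obtain ⟨m, ⟨hm1, hm, hmmin⟩, hdvd⟩ := exists_min_period hn1 hp
      exact ⟨m, ⟨hm1, x', hm, hmmin⟩, hdvd⟩

theorem exists_cs_dvd {α : PT X} : ∀ n ∈ Mset α, ∃ m ∈ cs α, m ∣ n := by
  intro n
  induction n using Nat.strong_induction_on with
  | _ n ih =>
      intro hn
      by_cases hmin : ∀ m ∈ Mset α, m ∣ n → m = n
      · exact ⟨n, ⟨hn, hmin⟩, dvd_refl n⟩
      · push_neg at hmin
        obtain ⟨m, hm, hdvd, hne⟩ := hmin
        have hm1 : 1 ≤ m := hm.1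
        have hn1 : 1 ≤ n := hn.1
        have hlt : m < n := lt_of_le_of_ne (Nat.le_of_dvd (by omega) hdvd) hne
        obtain ⟨m', hm', hdvd'⟩ := ih m hlt hm
        exact ⟨m', hm', dvd_trans hdvd' hdvd⟩

theorem cs_eq_of_transfers {α β : PT X}
    (hab : ∀ n ∈ Mset α, ∃ m ∈ Mset β, m ∣ n)
    (hba : ∀ n ∈ Mset β, ∃ m ∈ Mset α, m ∣ n) : cs α = cs β := by
  have key : ∀ (α' β' : PT X), (∀ n ∈ Mset α', ∃ m ∈ Mset β', m ∣ n) →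
      (∀ n ∈ Mset β', ∃ m ∈ Mset α', m ∣ n) → cs α' ⊆ cs β' := by
    intro α' β' h1 h2 n hn
    obtain ⟨hnM, hnmin⟩ := hn
    obtain ⟨m, hm, hdvd⟩ := h1 n hnM
    obtain ⟨m', hm', hdvd'⟩ := h2 m hm
    have hm'n : m' = n := hnmin m' hm' (dvd_trans hdvd' hdvd)
    subst hm'n
    have : m = m' := Nat.dvd_antisymm hdvd hdvd'
    subst this
    refine ⟨hm, ?_⟩
    intro k hk hkdvd
    obtain ⟨k', hk', hkdvd'⟩ := h2 k hk
    have : k' = m := hnmin k' hk' (dvd_trans hkdvd' hkdvd)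
    subst this
    exact Nat.dvd_antisymm hkdvd (by exact hkdvd')
  exact Set.Subset.antisymm (key α β hab hba) (key β α hba hab)

----------------------------------------------------------------
-- sVal machinery
----------------------------------------------------------------

def sValSet (α : PT X) : Set Ordinal :=
  {o : Ordinal | ∃ γ : PT X, IsComponent α γ ∧ ¬HasCycleAny γ ∧
    ∃ x0 ∈ pspan γ, γ x0 = none ∧ o = prank γ x0}

theorem sVal_eq (α : PT X) : sVal α = sSup (sValSet α) := rfl

theorem sValSet_finite [Finite X] (α : PT X) : (sValSet α).Finite := by
  haveI := Fintype.ofFinite X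
  haveI : Finite (PT X) := by unfold PT; infer_instance
  apply Set.Finite.subset (Set.finite_range (fun p : PT X × X => prank p.1 p.2))
  rintro o ⟨γ, _, _, x0, _, _, rfl⟩
  exact ⟨(γ, x0), rfl⟩

theorem sValSet_bdd [Finite X] (α : PT X) : BddAbove (sValSet α) :=
  (sValSet_finite α).bddAbove

theorem comp0_sub {α : PT X} {x0 t u : X} (h : comp0 α x0 t = some u) :
    α t = some u := by
  by_cases hc : α t ≠ none ∧ relP α t x0
  · rwa [comp0, if_pos hc] at h
  · rw [comp0, if_neg hc] at h; exact absurd h (by simp)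

theorem comp0_relP {α : PT X} {x0 t : X} (h : comp0 α x0 t ≠ none) :
    relP α t x0 := by
  by_cases hc : α t ≠ none ∧ relP α t x0
  · exact hc.2
  · rw [comp0, if_neg hc] at h; exact absurd rfl h

theorem comp0_eq_of {α : PT X} {x0 t : X} (h1 : α t ≠ none) (h2 : relP α t x0) :
    comp0 α x0 t = α t := by rw [comp0, if_pos ⟨h1, h2⟩]

theorem comp0_pit_sub {α : PT X} {x0 t u : X} {k : ℕ}
    (ht : pit (comp0 α x0) k t = some u) : pit α k t = some u := by
  induction k generalizing t with
  | zero => exact ht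
  | succ k ih =>
      rw [pit_succ'] at ht ⊢
      cases hg : comp0 α x0 t with
      | none => rw [hg] at ht; exact absurd ht (by simp)
      | some v => rw [hg] at ht; rw [comp0_sub hg]; exact ih ht

theorem comp0_no_cycle_of_dies {α : PT X} {x0 : X}
    (hd : ∃ t, pit α t x0 = none) : ¬ HasCycleAny (comp0 α x0) := by
  rintro ⟨k, hk1, c, hc, _⟩
  have hper : Periodic α c := ⟨k, hk1, comp0_pit_sub hc⟩
  have hcd : comp0 α x0 c ≠ none := by
    intro hn
    have h1 : pit (comp0 α x0) 1 c ≠ none :=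
      pit_defined_of_le hk1 (by rw [hc]; simp)
    rw [pit_one] at h1; exact h1 hn
  obtain ⟨k1, m1, z, hzk, hzm⟩ := comp0_relP hcd
  have hzper : Periodic α z := periodic_of_forward hper hzk
  obtain ⟨t0, ht0⟩ := hd
  rcases le_total m1 t0 with hle | hle
  · obtain ⟨e, rfl⟩ := Nat.exists_eq_add_of_le hle
    rw [pit_add_some hzm] at ht0
    exact periodic_all_defined hzper e ht0
  · exact pit_defined_of_le hle (by rw [hzm]; simp) ht0

theorem component_class_mem {α γ : PT X} (hcomp : IsComponent α γ) :
    ∃ c0, α c0 ≠ none ∧ (∀ t, α t ≠ none → relP α t c0 → γ t = α t) ∧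
      (∀ t, γ t ≠ none → (α t ≠ none ∧ relP α t c0)) := by
  obtain ⟨c0, hc0, h1, h2⟩ := hcomp
  refine ⟨c0, hc0, h1, fun t ht => ?_⟩
  by_contra hc
  exact ht (h2 t hc)

theorem component_root_none {α γ : PT X} (hcomp : IsComponent α γ) {x0 : X}
    (hx0 : x0 ∈ pspan γ) (hγ : γ x0 = none) : α x0 = none := by
  rcases hx0 with hd | hi
  · exact absurd hγ hd
  · obtain ⟨w, hw⟩ := hi
    obtain ⟨c0, hc0, h1, h2⟩ := component_class_mem hcomp
    have hwcl := h2 w (by rw [hw]; simp)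
    by_contra hαx0
    have hrel : relP α x0 c0 := relP_of_image hwcl.2 (component_sub hcomp hw)
    rw [h1 x0 hαx0 hrel] at hγ
    exact hαx0 hγ

theorem sVal_le_of_rpHom [Finite X] {α β φ : PT X} (h : IsRpHom α β φ)
    (hdom : ∀ y ∈ pim α, φ y ≠ none) : sVal α ≤ sVal β := by
  rw [sVal_eq, sVal_eq]
  apply csSup_le'
  rintro o ⟨γ, hγcomp, hγnc, x0, hx0span, hγx0, rfl⟩
  -- x0 is terminal for α
  have hαx0 : α x0 = none := component_root_none hγcomp hx0span hγx0
  have hx0im : x0 ∈ pim γ := by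
    rcases hx0span with hd | hi
    · exact absurd hγx0 hd
    · exact hi
  obtain ⟨w, hw⟩ := hx0im
  have hαw : α w = some x0 := component_sub hγcomp hw
  obtain ⟨w', y', hφw, hφx0, hβw'⟩ := h.1 w x0 hαw
  have hβy' : β y' = none := h.2 x0 y' hαx0 hφx0
  -- the β-component of w'
  set γ' := comp0 β w' with hγ'def
  have hβw'ne : β w' ≠ none := by rw [hβw']; simp
  have hγ'comp : IsComponent β γ' := comp0_isComponent hβw'ne
  have hγ'nc : ¬ HasCycleAny γ' := by
    apply comp0_no_cycle_of_dies
    refine ⟨2, ?_⟩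
    rw [pit_succ, pit_one, hβw', Option.bind_some, hβy']
  -- class facts on the α side
  obtain ⟨c0, hc0, h1, h2⟩ := component_class_mem hγcomp
  have hwcl := h2 w (by rw [hw]; simp)
  -- well-foundedness
  have hwfγ : WellFounded (fun y z : X => γ y = some z) := wf_of_no_cycle hγnc
  have hwfγ' : WellFounded (fun y z : X => γ' y = some z) := wf_of_no_cycle hγ'nc
  -- rank comparison
  have hrank : prank γ x0 ≤ prank γ' y' := by
    refine prank_le_of_hom hwfγ hwfγ' φ ?_ x0 y' hφx0
    intro y z hyz
    have hαyz : α y = some z := component_sub hγcomp hyz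
    obtain ⟨y1, z1, hy1, hz1, harc⟩ := h.1 y z hαyz
    refine ⟨y1, z1, hy1, hz1, ?_⟩
    -- y1 is in the β-class of w'
    have hycl := h2 y (by rw [hyz]; simp)
    have hrelyw : relP α y w := relP_trans hycl.2 (relP_symm hwcl.2)
    have hrel : relP β y1 w' := rpHom_relP h hrelyw hy1 hφw
    rw [hγ'def, comp0_eq_of (by rw [harc]; simp) hrel]
    exact harc
  -- y' is the root of γ'
  have hy'span : y' ∈ pspan γ' := by
    right
    refine ⟨w', ?_⟩
    rw [hγ'def, comp0_eq_of hβw'ne (relP_refl β w')]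
    exact hβw'
  have hγ'y' : γ' y' = none := by
    rw [hγ'def, comp0]
    by_cases hc : β y' ≠ none ∧ relP β y' w'
    · exact absurd hβy' hc.1
    · rw [if_neg hc]
  refine le_trans hrank (le_csSup (sValSet_bdd β) ?_)
  exact ⟨γ', hγ'comp, hγ'nc, y', hy'span, hγ'y', rfl⟩

----------------------------------------------------------------
-- zero cases and assembly
----------------------------------------------------------------

theorem pcomp_pzero (ψ : PT X) : pcomp ψ pzero = pzero := by
  funext x; cases h : ψ x <;> simp [pcomp, h, pzero]

theorem Mset_pzero : Mset (pzero : PT X) = ∅ := by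
  ext k
  simp only [Mset, Set.mem_setOf_eq, Set.mem_empty_iff_false, iff_false]
  rintro ⟨hk1, x, hx, _⟩
  have : pit (pzero : PT X) 1 x ≠ none := pit_defined_of_le hk1 (by rw [hx]; simp)
  rw [pit_one] at this
  exact this rfl

theorem cs_pzero : cs (pzero : PT X) = ∅ := by
  rw [cs, Mset_pzero]; ext n; simp

theorem sVal_pzero : sVal (pzero : PT X) = 0 := by
  rw [sVal_eq]
  have : sValSet (pzero : PT X) = ∅ := by
    ext o
    simp only [sValSet, Set.mem_setOf_eq, Set.mem_empty_iff_false, iff_false]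
    rintro ⟨γ, ⟨x0, hx0, _⟩, _⟩
    exact hx0 rfl
  rw [this, csSup_empty]
  rfl

theorem conjP_self_pzero : ConjP (pzero : PT X) pzero := by
  refine ⟨pzero, ?_, pzero, ?_, rfl, rfl⟩ <;>
    · left; rw [if_pos rfl]; rfl

theorem pzero_of_conjP_pzero [Nonempty X] {β : PT X}
    (h : ConjP (pzero : PT X) β) : β = pzero := by
  obtain ⟨φ, hφ, ψ, hψ, h1, h2⟩ := h
  by_contra hβ
  have hdom := Pfrak1P_dom hβ hψ
  rw [pcomp_pzero] at h2
  obtain ⟨x, y, hxy⟩ := pzero_ne_iff.mp hβ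
  have : pcomp β ψ x = none := by rw [h2]; rfl
  simp only [pcomp, hxy, Option.bind_some] at this
  exact hdom y ⟨x, hxy⟩ this

theorem exists_periodic_of_not_dies [Finite X] {α : PT X} {x : X}
    (h : ∀ t, pit α t x ≠ none) : ∃ k z, pit α k x = some z ∧ Periodic α z := by
  haveI := Fintype.ofFinite X
  obtain ⟨i, j, hij, hmap⟩ :=
    Finite.exists_ne_map_eq_of_infinite (fun t : ℕ => pit α t x)
  rcases hij.lt_or_gt with hlt | hlt
  case _ =>
    cases hz : pit α i x with
    | none => exact absurd hz (h i)
    | some z =>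
        have hz' : pit α j x = some z := by rw [← hmap]; exact hz
        have := pit_compare (le_of_lt hlt) hz hz'
        exact ⟨i, z, hz, ⟨j - i, by omega, this⟩⟩
  case _ =>
    cases hz : pit α j x with
    | none => exact absurd hz (h j)
    | some z =>
        have hz' : pit α i x = some z := by rw [hmap]; exact hz
        have := pit_compare (le_of_lt hlt) hz hz'
        exact ⟨j, z, hz, ⟨i - j, by omega, this⟩⟩

theorem Mset_nonempty_of_periodic {α : PT X} {z : X} (h : Periodic α z) :
    (Mset α).Nonempty := by
  obtain ⟨p, hp1, hp⟩ := h
  obtain ⟨m, ⟨hm1, hm, hmin⟩, _⟩ := exists_min_period hp1 hp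
  exact ⟨m, hm1, z, hm, hmin⟩

theorem nonzero_invariant [Finite X] {β : PT X} (hβ : β ≠ pzero) :
    (cs β).Nonempty ∨ 0 < sVal β := by
  obtain ⟨x0, y0, hx0⟩ := pzero_ne_iff.mp hβ
  by_cases hd : ∃ t, pit β t x0 = none
  · right
    classical
    set t0 := Nat.find hd with ht0def
    have ht0 : pit β t0 x0 = none := Nat.find_spec hd
    have ht02 : 2 ≤ t0 := by
      by_contra hc
      push_neg at hc
      interval_cases t0
      · rw [pit_zero] at ht0; exact absurd ht0 (by simp)
      · rw [pit_one, hx0] at ht0; exact absurd ht0 (by simp)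
    -- z := x0 β^{t0-1}, w := x0 β^{t0-2}
    cases hw : pit β (t0-2) x0 with
    | none => exact absurd hw (Nat.find_min hd (by omega))
    | some w =>
    cases hz : pit β (t0-1) x0 with
    | none => exact absurd hz (Nat.find_min hd (by omega))
    | some z =>
        have hβw : β w = some z := by
          have : pit β (t0-1) x0 = (pit β (t0-2) x0).bind β := by
            rw [show t0 - 1 = (t0-2)+1 by omega, pit_succ]
          rw [this, hw, Option.bind_some] at hz
          exact hz
        have hβz : β z = none := by
          have h5 := pit_succ β (t0-1) x0
          rw [show (t0-1)+1 = t0 by omega, hz, Option.bind_some] at h5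
          rw [h5] at ht0
          exact ht0
        set γ := comp0 β x0 with hγdef
        have hγcomp : IsComponent β γ := comp0_isComponent (by rw [hx0]; simp)
        have hγnc : ¬ HasCycleAny γ := comp0_no_cycle_of_dies ⟨t0, ht0⟩
        have hrelw : relP β w x0 := ⟨0, t0-2, w, rfl, hw⟩
        have hγw : γ w = some z := by
          rw [hγdef, comp0_eq_of (by rw [hβw]; simp) hrelw]; exact hβw
        have hzim : z ∈ pspan γ := Or.inr ⟨w, hγw⟩
        have hγz : γ z = none := by
          rw [hγdef, comp0]
          by_cases hc : β z ≠ none ∧ relP β z x0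
          · exact absurd hβz hc.1
          · rw [if_neg hc]
        have hwf : WellFounded (fun y z : X => γ y = some z) := wf_of_no_cycle hγnc
        have hrank : (1 : Ordinal) ≤ prank γ z := by
          have := le_prank_of_chain hwf (fun i => if i = 0 then z else w)
            (n := 1) (by intro i hi; interval_cases i; simpa using hγw)
          simpa using this
        have hmem : prank γ z ∈ sValSet β := ⟨γ, hγcomp, hγnc, z, hzim, hγz, rfl⟩
        calc (0 : Ordinal) < 1 := zero_lt_one
          _ ≤ prank γ z := hrank
          _ ≤ sVal β := le_csSup (sValSet_bdd β) hmem
  · left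
    push_neg at hd
    obtain ⟨k, z, _, hper⟩ := exists_periodic_of_not_dies hd
    obtain ⟨m, hm⟩ := Mset_nonempty_of_periodic hper
    obtain ⟨m', hm', _⟩ := exists_cs_dvd m hm
    exact ⟨m', hm'⟩

theorem conj_forward [Finite X] [Nonempty X] {α β : PT X} (h : ConjP α β) :
    cs α = cs β ∧ sVal α = sVal β := by
  by_cases hα : α = pzero
  · subst hα
    have := pzero_of_conjP_pzero h
    subst this
    exact ⟨rfl, rfl⟩
  by_cases hβ : β = pzero
  · subst hβ
    obtain ⟨φ, hφ, ψ, hψ, h1, h2⟩ := h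
    have : α = pzero := pzero_of_conjP_pzero ⟨ψ, hψ, φ, hφ, h2, h1⟩
    exact absurd this hα
  obtain ⟨φ, hφ, ψ, hψ, h1, h2⟩ := h
  have hdomφ := Pfrak1P_dom hα hφ
  have hdomψ := Pfrak1P_dom hβ hψ
  have hrpφ := rpHom_of_semiconj hdomφ h1
  have hrpψ := rpHom_of_semiconj hdomψ h2
  constructor
  · exact cs_eq_of_transfers (Mset_transfer hrpφ hdomφ) (Mset_transfer hrpψ hdomψ)
  · exact le_antisymm (sVal_le_of_rpHom hrpφ hdomφ) (sVal_le_of_rpHom hrpψ hdomψ)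

----------------------------------------------------------------
-- dying orbits: death time and root
----------------------------------------------------------------

def Dies (α : PT X) (x : X) : Prop := ∃ t, pit α t x = none

theorem dies_find_pos {α : PT X} {x : X} (h : Dies α x) : 1 ≤ Nat.find h := by
  rcases Nat.eq_zero_or_pos (Nat.find h) with h0 | h0
  · have := Nat.find_spec h
    rw [h0, pit_zero] at this
    exact absurd this (by simp)
  · exact h0

noncomputable def DTime (α : PT X) (x : X) (h : Dies α x) : ℕ := Nat.find h - 1

theorem dtime_spec {α : PT X} {x : X} (h : Dies α x) :
    ∃ z, pit α (DTime α x h) x = some z := by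
  have hlt : DTime α x h < Nat.find h := by
    have := dies_find_pos h; rw [DTime]; omega
  have := Nat.find_min h hlt
  cases hz : pit α (DTime α x h) x with
  | none => exact absurd hz this
  | some z => exact ⟨z, rfl⟩

noncomputable def RootOf (α : PT X) (x : X) (h : Dies α x) : X :=
  (dtime_spec h).choose

theorem rootOf_spec {α : PT X} {x : X} (h : Dies α x) :
    pit α (DTime α x h) x = some (RootOf α x h) := (dtime_spec h).choose_spec

theorem dtime_succ_none {α : PT X} {x : X} (h : Dies α x) :
    pit α (DTime α x h + 1) x = none := by
  have : DTime α x h + 1 = Nat.find h := by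
    have := dies_find_pos h; rw [DTime]; omega
  rw [this]; exact Nat.find_spec h

theorem rootOf_none {α : PT X} {x : X} (h : Dies α x) :
    α (RootOf α x h) = none := by
  have h1 := dtime_succ_none h
  rw [pit_succ, rootOf_spec h, Option.bind_some] at h1
  exact h1

theorem dies_of_image {α : PT X} {x y : X} (hxy : α x = some y) (h : Dies α y) :
    Dies α x := by
  obtain ⟨t, ht⟩ := h
  exact ⟨t+1, by rw [pit_succ', hxy, Option.bind_some]; exact ht⟩

theorem dies_image {α : PT X} {x y : X} (hxy : α x = some y) (h : Dies α x) :
    Dies α y := by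
  obtain ⟨t, ht⟩ := h
  have ht1 : 1 ≤ t := by
    by_contra hc
    push_neg at hc
    interval_cases t
    rw [pit_zero] at ht; exact absurd ht (by simp)
  refine ⟨t-1, ?_⟩
  have := pit_succ' α (t-1) x
  rw [show (t-1)+1 = t by omega, hxy, Option.bind_some] at this
  rw [← this]; exact ht

theorem dtime_step {α : PT X} {x y : X} (hxy : α x = some y) (hx : Dies α x)
    (hy : Dies α y) :
    DTime α x hx = DTime α y hy + 1 ∧ RootOf α x hx = RootOf α y hy := by
  have key : ∀ t, pit α (t+1) x = pit α t y := fun t => by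
    rw [pit_succ', hxy, Option.bind_some]
  have hfind : Nat.find hx = Nat.find hy + 1 := by
    have h1 : Nat.find hx ≤ Nat.find hy + 1 := by
      apply Nat.find_le
      rw [key]; exact Nat.find_spec hy
    have h2 : Nat.find hy ≤ Nat.find hx - 1 := by
      apply Nat.find_le
      rw [← key]
      have := dies_find_pos hx
      rw [show (Nat.find hx - 1) + 1 = Nat.find hx by omega]
      exact Nat.find_spec hx
    have := dies_find_pos hx
    omega
  have hdt : DTime α x hx = DTime α y hy + 1 := by
    rw [DTime, DTime, hfind]
    have := dies_find_pos hy
    omega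
  refine ⟨hdt, ?_⟩
  have h1 := rootOf_spec hx
  rw [hdt, show DTime α y hy + 1 = DTime α y hy + 1 from rfl] at h1
  rw [key] at h1
  rw [rootOf_spec hy] at h1
  injection h1 with h1
  exact h1.symm

theorem dtime_zero_of_terminal {α : PT X} {x : X} (hx : α x = none)
    (h : Dies α x) : DTime α x h = 0 ∧ RootOf α x h = x := by
  have hfind : Nat.find h = 1 := by
    have h1 : Nat.find h ≤ 1 := Nat.find_le (by rw [pit_one]; exact hx)
    have := dies_find_pos h
    omega
  have hdt : DTime α x h = 0 := by rw [DTime, hfind]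
  refine ⟨hdt, ?_⟩
  have h1 := rootOf_spec h
  rw [hdt, pit_zero] at h1
  injection h1 with h1
  exact h1.symm

-- bound on death time
theorem dtime_lt_card [Finite X] {α : PT X} {x : X} (h : Dies α x) :
    DTime α x h ≤ Nat.card X := by
  haveI := Fintype.ofFinite X
  -- the orbit up to DTime is injective into Option X
  have hinj : Function.Injective
      (fun i : Fin (DTime α x h + 1) => pit α i.val x) := by
    rintro ⟨i, hi⟩ ⟨j, hj⟩ hij
    simp only at hij
    rcases Nat.lt_trichotomy i j with hlt | heq | hlt
    · exfalso
      cases hu : pit α i x with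
      | none =>
          exact absurd hu (fun hc => (Nat.find_min h
            (show i < Nat.find h by have := dies_find_pos h; rw [DTime] at hi; omega)) hc)
      | some u =>
          have hu' : pit α j x = some u := by rw [← hij]; exact hu
          have hper : Periodic α u := ⟨j - i, by omega, pit_compare (by omega) hu hu'⟩
          obtain ⟨t, ht⟩ := h
          rcases le_total i t with hle | hle
          · obtain ⟨e, rfl⟩ := Nat.exists_eq_add_of_le hle
            rw [pit_add_some hu] at ht
            exact periodic_all_defined hper e ht
          · exact pit_defined_of_le hle (by rw [hu]; simp) ht
    · exact Fin.ext heq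
    · exfalso
      cases hu : pit α j x with
      | none =>
          exact absurd hu (fun hc => (Nat.find_min h
            (show j < Nat.find h by have := dies_find_pos h; rw [DTime] at hj; omega)) hc)
      | some u =>
          have hu' : pit α i x = some u := by rw [hij]; exact hu
          have hper : Periodic α u := ⟨i - j, by omega, pit_compare (by omega) hu hu'⟩
          obtain ⟨t, ht⟩ := h
          rcases le_total j t with hle | hle
          · obtain ⟨e, rfl⟩ := Nat.exists_eq_add_of_le hle
            rw [pit_add_some hu] at ht
            exact periodic_all_defined hper e ht
          · exact pit_defined_of_le hle (by rw [hu]; simp) ht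
  have := Fintype.card_le_of_injective _ hinj
  simp only [Fintype.card_fin, Fintype.card_option] at this
  rw [Nat.card_eq_fintype_card]
  omega

----------------------------------------------------------------
-- the depth of a root, and target chains in β
----------------------------------------------------------------

def Dset (α : PT X) (z : X) : Set ℕ :=
  {d | ∃ x ∈ pspan α, ∃ h : Dies α x, RootOf α x h = z ∧ DTime α x h = d}

noncomputable def Dval (α : PT X) (z : X) : ℕ := sSup (Dset α z)

theorem Dset_bdd [Finite X] (α : PT X) (z : X) : BddAbove (Dset α z) := by
  refine ⟨Nat.card X, ?_⟩
  rintro d ⟨x, _, h, _, rfl⟩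
  exact dtime_lt_card h

theorem le_Dval [Finite X] {α : PT X} {z : X} {d : ℕ} (h : d ∈ Dset α z) :
    d ≤ Dval α z := le_csSup (Dset_bdd α z) h

theorem Dset_one {α : PT X} {z w : X} (hz : α z = none) (hw : α w = some z) :
    1 ∈ Dset α z := by
  have hdw : Dies α w := ⟨2, by
    rw [pit_succ, pit_one, hw, Option.bind_some]; exact hz⟩
  have hdz : Dies α z := ⟨1, by rw [pit_one]; exact hz⟩
  obtain ⟨hd0, hr0⟩ := dtime_zero_of_terminal hz hdz
  obtain ⟨hd1, hr1⟩ := dtime_step hw hdw hdz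
  exact ⟨w, Or.inl (show α w ≠ none by rw [hw]; simp),
    hdw, by rw [hr1, hr0], by rw [hd1, hd0]⟩

theorem exists_chain [Finite X] {α β : PT X} (hs : sVal α = sVal β)
    {z : X} (hz : α z = none) (hzim : z ∈ pim α) :
    ∃ c : ℕ → X, β (c 0) = none ∧
      ∀ i, i < Dval α z → β (c (i+1)) = some (c i) := by
  classical
  set D := Dval α z with hDdef
  obtain ⟨w, hw⟩ := hzim
  have h1D : 1 ≤ D := le_Dval (Dset_one hz hw)
  -- a witness attaining D
  have hDmem : D ∈ Dset α z :=
    Nat.sSup_mem ⟨1, Dset_one hz hw⟩ (Dset_bdd α z)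
  obtain ⟨x, hxspan, hdx, hroot, hdt⟩ := hDmem
  -- the chain x → xα → ... → z inside comp0 α x
  have hαx : α x ≠ none := by
    intro hc
    obtain ⟨hd0, _⟩ := dtime_zero_of_terminal hc hdx
    omega
  set γ := comp0 α x with hγdef
  have hγcomp : IsComponent α γ := comp0_isComponent hαx
  have hγnc : ¬ HasCycleAny γ := comp0_no_cycle_of_dies hdx
  have hwf : WellFounded (fun y z : X => γ y = some z) := wf_of_no_cycle hγnc
  -- chain function: c i = x α^{D - i}
  have hdef : ∀ i, i ≤ D → ∃ u, pit α i x = some u := by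
    intro i hi
    have : i < Nat.find hdx := by
      have := dies_find_pos hdx
      rw [DTime] at hdt
      omega
    have := Nat.find_min hdx this
    cases hu : pit α i x with
    | none => exact absurd hu this
    | some u => exact ⟨u, rfl⟩
  set c : ℕ → X := fun i => if h : ∃ u, pit α (D - i) x = some u then h.choose else z
    with hcdef
  have hcspec : ∀ i, i ≤ D → pit α (D - i) x = some (c i) := by
    intro i hi
    have h := hdef (D - i) (by omega)
    rw [hcdef]
    simp only [dif_pos h]
    exact h.choose_spec
  have hc0 : c 0 = z := by
    have h3 := hcspec 0 (by omega)
    rw [Nat.sub_zero] at h3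
    have h2 := rootOf_spec hdx
    rw [hdt, hroot] at h2
    rw [h3] at h2
    injection h2
  have hchain : ∀ i, i < D → γ (c (i+1)) = some (c i) := by
    intro i hi
    have h1 := hcspec (i+1) (by omega)
    have h2 := hcspec i (by omega)
    have harc : α (c (i+1)) = some (c i) := by
      have := pit_succ α (D - (i+1)) x
      rw [h1, Option.bind_some, show D - (i+1) + 1 = D - i by omega, h2] at this
      exact this.symm
    rw [hγdef, comp0_eq_of (by rw [harc]; simp) ?_]
    · exact harc
    · exact ⟨0, D - (i+1), c (i+1), rfl, h1⟩
  -- rank of z in γ is at least D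
  have hrankz : (D : Ordinal) ≤ prank γ z := by
    have := le_prank_of_chain hwf c hchain
    rwa [hc0] at this
  -- z is a root of γ
  have hγz : γ z = none := by
    rw [hγdef, comp0]
    by_cases hcc : α z ≠ none ∧ relP α z x
    · exact absurd hz hcc.1
    · rw [if_neg hcc]
  have hzspan : z ∈ pspan γ := by
    right
    refine ⟨c 1, ?_⟩
    rw [← hc0]
    exact hchain 0 (by omega)
  -- so D ≤ sVal α = sVal β
  have hDs : (D : Ordinal) ≤ sVal β := by
    rw [← hs, sVal_eq]
    exact le_trans hrankz (le_csSup (sValSet_bdd α)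
      ⟨γ, hγcomp, hγnc, z, hzspan, hγz, rfl⟩)
  -- sVal β is attained
  have hSne : (sValSet β).Nonempty := by
    by_contra hc
    rw [Set.not_nonempty_iff_eq_empty] at hc
    rw [sVal_eq, hc, csSup_empty] at hDs
    have : (D : Ordinal) = 0 := le_antisymm hDs zero_le
    rw [Nat.cast_eq_zero] at this
    omega
  have hmax : sSup (sValSet β) ∈ sValSet β :=
    Set.Nonempty.csSup_mem hSne (sValSet_finite β)
  obtain ⟨γ', hγ'comp, hγ'nc, y0, hy0span, hγ'y0, hy0rank⟩ := hmax
  have hwf' : WellFounded (fun y z : X => γ' y = some z) := wf_of_no_cycle hγ'nc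
  have hrk : (D : Ordinal) ≤ prank γ' y0 := by
    rw [← hy0rank, ← sVal_eq]
    exact hDs
  obtain ⟨c', hc'0, hc'⟩ := chain_of_le_prank hwf' hrk
  refine ⟨c', ?_, ?_⟩
  · rw [hc'0]
    exact component_root_none hγ'comp hy0span hγ'y0
  · intro i hi
    exact component_sub hγ'comp (hc' i hi)

----------------------------------------------------------------
-- cycles: minimal periods, base points, phases
----------------------------------------------------------------

noncomputable def MinP (α : PT X) (x : X) (h : Periodic α x) : ℕ := Nat.find h

theorem minp_pos {α : PT X} {x : X} (h : Periodic α x) : 1 ≤ MinP α x h :=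
  (Nat.find_spec h).1

theorem minp_spec {α : PT X} {x : X} (h : Periodic α x) :
    pit α (MinP α x h) x = some x := (Nat.find_spec h).2

theorem minp_min {α : PT X} {x : X} (h : Periodic α x) :
    ∀ i, 1 ≤ i → i < MinP α x h → pit α i x ≠ some x := by
  intro i hi1 hilt hc
  exact absurd (⟨hi1, hc⟩ : 1 ≤ i ∧ pit α i x = some x) (Nat.find_min h hilt)

theorem minp_dvd {α : PT X} {x : X} (h : Periodic α x) {n : ℕ}
    (hn1 : 1 ≤ n) (hn : pit α n x = some x) : MinP α x h ∣ n :=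
  dvd_of_min_period (minp_pos h) (minp_spec h) (minp_min h) hn1 hn

theorem minp_hasCycle {α : PT X} {x : X} (h : Periodic α x) :
    MinP α x h ∈ Mset α :=
  ⟨minp_pos h, x, minp_spec h, minp_min h⟩

-- pull back along the cycle: x = (x α) α^{p-1}
theorem cycle_back {α : PT X} {x x' : X} (h : Periodic α x) (hx : α x = some x') :
    pit α (MinP α x h - 1) x' = some x := by
  have h1 := minp_spec h
  have h2 := pit_succ' α (MinP α x h - 1) x
  rw [show (MinP α x h - 1) + 1 = MinP α x h by have := minp_pos h; omega] at h2
  rw [h2, hx, Option.bind_some] at h1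
  exact h1

theorem minp_image {α : PT X} {x x' : X} (h : Periodic α x) (hx : α x = some x')
    (h' : Periodic α x') : MinP α x' h' = MinP α x h := by
  have hd1 : MinP α x' h' ∣ MinP α x h := by
    apply minp_dvd h' (minp_pos h)
    have e1 := pit_succ' α (MinP α x h) x
    rw [hx, Option.bind_some] at e1
    have e2 := pit_succ α (MinP α x h) x
    rw [minp_spec h, Option.bind_some, hx] at e2
    rw [e1] at e2
    exact e2
  have hd2 : MinP α x h ∣ MinP α x' h' := by
    apply minp_dvd h (minp_pos h')
    have hb := cycle_back h hx
    have e1 : pit α ((MinP α x h - 1) + MinP α x' h') x' = pit α (MinP α x' h') x :=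
      pit_add_some hb
    have e2 : pit α (MinP α x' h' + (MinP α x h - 1)) x' = some x := by
      rw [pit_add_some (minp_spec h')]; exact hb
    rw [Nat.add_comm] at e2
    rw [e1] at e2
    exact e2
  exact Nat.dvd_antisymm hd1 hd2

theorem minp_forward {α : PT X} {x u : X} (h : Periodic α x) {k : ℕ}
    (hk : pit α k x = some u) (hu : Periodic α u) :
    MinP α u hu = MinP α x h := by
  induction k generalizing x with
  | zero =>
      rw [pit_zero] at hk
      obtain rfl : x = u := by injection hk
      rfl
  | succ k ih =>
      rw [pit_succ'] at hk
      cases hax : α x with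
      | none => rw [hax] at hk; exact absurd hk (by simp)
      | some y =>
          rw [hax, Option.bind_some] at hk
          have hy : Periodic α y := periodic_of_forward h (by rw [pit_one]; exact hax)
          rw [ih hy hk]
          exact minp_image h hax hy

-- cycle sets and base points
def cycOf (α : PT X) (c : X) : Set X := {y | ∃ i, pit α i c = some y}

theorem cyc_self (α : PT X) (c : X) : c ∈ cycOf α c := ⟨0, rfl⟩

noncomputable def pickIn (S : Set X) (h : S.Nonempty) : X := h.choose

theorem pickIn_mem (S : Set X) (h : S.Nonempty) : pickIn S h ∈ S := h.choose_spec

theorem pickIn_congr {S S' : Set X} (h : S.Nonempty) (h' : S'.Nonempty)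
    (hSS : S = S') : pickIn S h = pickIn S' h' := by subst hSS; rfl

theorem cyc_image {α : PT X} {c c' : X} (h : Periodic α c) (hc : α c = some c') :
    cycOf α c' = cycOf α c := by
  ext y
  constructor
  · rintro ⟨i, hi⟩
    exact ⟨i+1, by rw [pit_succ', hc, Option.bind_some]; exact hi⟩
  · rintro ⟨i, hi⟩
    refine ⟨MinP α c h - 1 + i, ?_⟩
    rw [pit_add_some (cycle_back h hc)]
    exact hi

noncomputable def basePt (α : PT X) (c : X) : X :=
  pickIn (cycOf α c) ⟨c, cyc_self α c⟩

theorem basePt_mem (α : PT X) (c : X) : basePt α c ∈ cycOf α c :=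
  pickIn_mem _ _

theorem basePt_image {α : PT X} {c c' : X} (h : Periodic α c) (hc : α c = some c') :
    basePt α c' = basePt α c :=
  pickIn_congr _ _ (cyc_image h hc)

theorem periodic_basePt {α : PT X} {c : X} (h : Periodic α c) :
    Periodic α (basePt α c) := by
  obtain ⟨j, hj⟩ := basePt_mem α c
  exact periodic_of_forward h hj

theorem minp_basePt {α : PT X} {c : X} (h : Periodic α c) :
    MinP α (basePt α c) (periodic_basePt h) = MinP α c h := by
  obtain ⟨j, hj⟩ := basePt_mem α c
  exact minp_forward h hj (periodic_basePt h)

theorem cyc_reach {α : PT X} {c u : X} (h : Periodic α c) {j : ℕ}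
    (hj : pit α j c = some u) : ∃ i, pit α i u = some c := by
  obtain ⟨p, hp1, hp⟩ := h
  refine ⟨p * (j+1) - j, ?_⟩
  have h1 : pit α (p * (j+1)) c = some c := periodic_mul hp (j+1)
  have h2 : pit α (j + (p * (j+1) - j)) c = pit α (p * (j+1) - j) u :=
    pit_add_some hj
  have hle : j ≤ p * (j+1) := by
    calc j ≤ j + 1 := by omega
      _ ≤ p * (j+1) := Nat.le_mul_of_pos_left (j+1) hp1
  rw [show j + (p * (j+1) - j) = p * (j+1) by omega] at h2
  rw [← h2]
  exact h1

theorem phase_aux {α : PT X} {c : X} (h : Periodic α c) :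
    ∃ i, pit α i (basePt α c) = some c := by
  obtain ⟨j, hj⟩ := basePt_mem α c
  exact cyc_reach h hj

noncomputable def phase (α : PT X) (c : X) (h : Periodic α c) : ℕ :=
  Nat.find (phase_aux h)

theorem phase_spec {α : PT X} {c : X} (h : Periodic α c) :
    pit α (phase α c h) (basePt α c) = some c := Nat.find_spec (phase_aux h)

-- exponent congruence at a periodic point
theorem exp_congr {α : PT X} {c u : X} (h : Periodic α c) {i j : ℕ}
    (hi : pit α i c = some u) (hj : pit α j c = some u) :
    i ≡ j [MOD MinP α c h] := by
  rcases le_total i j with hle | hle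
  · have hu : Periodic α u := periodic_of_forward h hi
    have hcomp := pit_compare hle hi hj
    rcases Nat.eq_zero_or_pos (j - i) with h0 | h0
    · have : i = j := by omega
      rw [this]
    · have hd := minp_dvd hu h0 hcomp
      rw [minp_forward h hi hu] at hd
      exact (Nat.modEq_iff_dvd' hle).mpr hd
  · have hu : Periodic α u := periodic_of_forward h hj
    have hcomp := pit_compare hle hj hi
    rcases Nat.eq_zero_or_pos (i - j) with h0 | h0
    · have : i = j := by omega
      rw [this]
    · have hd := minp_dvd hu h0 hcomp
      rw [minp_forward h hj hu] at hd
      exact ((Nat.modEq_iff_dvd' hle).mpr hd).symm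

theorem phase_step {α : PT X} {c c' : X} (h : Periodic α c) (hc : α c = some c')
    (h' : Periodic α c') :
    phase α c' h' ≡ phase α c h + 1 [MOD MinP α c h] := by
  set b := basePt α c with hbdef
  have hb' : basePt α c' = b := basePt_image h hc
  have hbper : Periodic α b := periodic_basePt h
  have h1 : pit α (phase α c h + 1) b = some c' := by
    rw [pit_succ, phase_spec h, Option.bind_some]
    exact hc
  have h2 : pit α (phase α c' h') b = some c' := by
    rw [← hb']
    exact phase_spec h'
  have := exp_congr hbper h2 h1
  rwa [minp_basePt h] at this

-- β-side: values of iterates at a cycle base point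
theorem pit_mod {β : PT X} {b : X} {m : ℕ} (hm1 : 1 ≤ m)
    (hm : pit β m b = some b) {k k' : ℕ} (hkk : k ≡ k' [MOD m]) :
    pit β k b = pit β k' b := by
  rcases le_total k k' with hle | hle
  · obtain ⟨q, hq⟩ := (Nat.modEq_iff_dvd' hle).mp hkk
    have h1 : pit β (m*q) b = some b := periodic_mul hm q
    have : pit β (m*q + k) b = pit β k b := by rw [pit_add_some h1]
    rw [← this, show m*q + k = k' by omega]
  · obtain ⟨q, hq⟩ := (Nat.modEq_iff_dvd' hle).mp hkk.symm
    have h1 : pit β (m*q) b = some b := periodic_mul hm q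
    have : pit β (m*q + k') b = pit β k' b := by rw [pit_add_some h1]
    rw [← this, show m*q + k' = k by omega]

theorem exists_target_cycle {α β : PT X} (hcs : cs α = cs β) {n : ℕ}
    (hn : n ∈ Mset α) :
    ∃ m b, (1 ≤ m ∧ pit β m b = some b ∧
      (∀ i, 1 ≤ i → i < m → pit β i b ≠ some b)) ∧ m ∣ n := by
  obtain ⟨m, hm, hdvd⟩ := exists_cs_dvd n hn
  rw [hcs] at hm
  obtain ⟨⟨hm1, b, hb, hbmin⟩, _⟩ := hm
  exact ⟨m, b, ⟨hm1, hb, hbmin⟩, hdvd⟩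

----------------------------------------------------------------
-- entering the cycle: K0 and CPT
----------------------------------------------------------------

theorem k0_aux [Finite X] {α : PT X} {x : X} (h : ¬ Dies α x) :
    ∃ k, ∃ z, pit α k x = some z ∧ Periodic α z := by
  have h' : ∀ t, pit α t x ≠ none := by
    intro t ht; exact h ⟨t, ht⟩
  obtain ⟨k, z, h1, h2⟩ := exists_periodic_of_not_dies h'
  exact ⟨k, z, h1, h2⟩

noncomputable def K0 [Finite X] (α : PT X) (x : X) (h : ¬ Dies α x) : ℕ :=
  Nat.find (k0_aux h)

noncomputable def CPT [Finite X] (α : PT X) (x : X) (h : ¬ Dies α x) : X :=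
  (Nat.find_spec (k0_aux h)).choose

theorem cpt_spec [Finite X] {α : PT X} {x : X} (h : ¬ Dies α x) :
    pit α (K0 α x h) x = some (CPT α x h) ∧ Periodic α (CPT α x h) :=
  (Nat.find_spec (k0_aux h)).choose_spec

theorem k0_step [Finite X] {α : PT X} {x y : X} (hxy : α x = some y)
    (hx : ¬ Dies α x) (hy : ¬ Dies α y) :
    (K0 α x hx = 0 ∧ K0 α y hy = 0 ∧ Periodic α (CPT α x hx) ∧
      α (CPT α x hx) = some (CPT α y hy)) ∨
    (K0 α x hx = K0 α y hy + 1 ∧ CPT α x hx = CPT α y hy) := by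
  by_cases hK : K0 α x hx = 0
  · left
    obtain ⟨h1, h2⟩ := cpt_spec hx
    rw [hK, pit_zero] at h1
    have hcx : CPT α x hx = x := by injection h1 with h1; exact h1.symm
    rw [hcx] at h2 ⊢
    have hyper : Periodic α y := periodic_of_forward h2 (by rw [pit_one]; exact hxy)
    have hK0y : K0 α y hy = 0 :=
      Nat.le_zero.mp (Nat.find_le ⟨y, by rw [pit_zero], hyper⟩)
    obtain ⟨h3, h4⟩ := cpt_spec hy
    rw [hK0y, pit_zero] at h3
    have hcy : CPT α y hy = y := by injection h3 with h3; exact h3.symm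
    rw [hcy]
    exact ⟨hK, hK0y, h2, hxy⟩
  · right
    have key : ∀ t, pit α (t+1) x = pit α t y := fun t => by
      rw [pit_succ', hxy, Option.bind_some]
    have hfind : Nat.find (k0_aux hx) = Nat.find (k0_aux hy) + 1 := by
      have h1 : Nat.find (k0_aux hx) ≤ Nat.find (k0_aux hy) + 1 := by
        apply Nat.find_le
        obtain ⟨z, hz1, hz2⟩ := Nat.find_spec (k0_aux hy)
        exact ⟨z, by rw [key]; exact hz1, hz2⟩
      have hKpos : 1 ≤ Nat.find (k0_aux hx) := by
        rcases Nat.eq_zero_or_pos (Nat.find (k0_aux hx)) with h0 | h0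
        · exact absurd h0 hK
        · exact h0
      have h2 : Nat.find (k0_aux hy) ≤ Nat.find (k0_aux hx) - 1 := by
        apply Nat.find_le
        obtain ⟨z, hz1, hz2⟩ := Nat.find_spec (k0_aux hx)
        refine ⟨z, ?_, hz2⟩
        rw [← key, show (Nat.find (k0_aux hx) - 1) + 1 = Nat.find (k0_aux hx) by omega]
        exact hz1
      omega
    have hKK : K0 α x hx = K0 α y hy + 1 := hfind
    refine ⟨hKK, ?_⟩
    obtain ⟨h1, _⟩ := cpt_spec hx
    obtain ⟨h3, _⟩ := cpt_spec hy
    rw [hKK, key] at h1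
    rw [h1] at h3
    injection h3

theorem rootOf_im {α : PT X} {x : X} (hx : x ∈ pspan α) (h : Dies α x) :
    RootOf α x h ∈ pim α := by
  rcases Nat.eq_zero_or_pos (DTime α x h) with h0 | h0
  · have h1 := rootOf_spec h
    rw [h0, pit_zero] at h1
    have hrx : RootOf α x h = x := by injection h1 with h1; exact h1.symm
    rw [hrx]
    have h2 := dtime_succ_none h
    rw [h0, pit_one] at h2
    rcases hx with hd | hi
    · exact absurd h2 hd
    · exact hi
  · have h1 := rootOf_spec h
    rw [show DTime α x h = (DTime α x h - 1) + 1 by omega] at h1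
    exact pit_some_exists_pre h1

----------------------------------------------------------------
-- proof-irrelevant wrappers
----------------------------------------------------------------

noncomputable def MinP' (α : PT X) (c : X) : ℕ :=
  if h : Periodic α c then MinP α c h else 1

theorem minP'_eq {α : PT X} {c : X} (h : Periodic α c) :
    MinP' α c = MinP α c h := dif_pos h

noncomputable def phase' (α : PT X) (c : X) : ℕ :=
  if h : Periodic α c then phase α c h else 0

theorem phase'_eq {α : PT X} {c : X} (h : Periodic α c) :
    phase' α c = phase α c h := dif_pos h

noncomputable def K0' [Finite X] (α : PT X) (x : X) : ℕ :=
  if h : ¬ Dies α x then K0 α x h else 0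

theorem K0'_eq [Finite X] {α : PT X} {x : X} (h : ¬ Dies α x) :
    K0' α x = K0 α x h := dif_pos h

noncomputable def CPT' [Finite X] [Nonempty X] (α : PT X) (x : X) : X :=
  if h : ¬ Dies α x then CPT α x h else Classical.arbitrary X

theorem CPT'_eq [Finite X] [Nonempty X] {α : PT X} {x : X} (h : ¬ Dies α x) :
    CPT' α x = CPT α x h := dif_pos h

noncomputable def RootOf' (α : PT X) (x : X) [Nonempty X] : X :=
  if h : Dies α x then RootOf α x h else Classical.arbitrary X

theorem RootOf'_eq {α : PT X} {x : X} [Nonempty X] (h : Dies α x) :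
    RootOf' α x = RootOf α x h := dif_pos h

noncomputable def DTime' (α : PT X) (x : X) : ℕ :=
  if h : Dies α x then DTime α x h else 0

theorem DTime'_eq {α : PT X} {x : X} (h : Dies α x) :
    DTime' α x = DTime α x h := dif_pos h

----------------------------------------------------------------
-- the construction
----------------------------------------------------------------

theorem exists_semiconj [Finite X] [Nonempty X] {α β : PT X}
    (hcs : cs α = cs β) (hs : sVal α = sVal β) :
    ∃ φ : PT X, (∀ y ∈ pim α, φ y ≠ none) ∧ pcomp α φ = pcomp φ β := by
  classical
  -- chains in β for the dying components
  have hchain : ∀ z : X, α z = none → z ∈ pim α → ∃ c : ℕ → X,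
      β (c 0) = none ∧ ∀ i, i < Dval α z → β (c (i+1)) = some (c i) :=
    fun z h1 h2 => exists_chain (β := β) hs h1 h2
  set cfn : X → ℕ → X := fun z =>
    if h : α z = none ∧ z ∈ pim α then (hchain z h.1 h.2).choose
    else fun _ => z with hcfndef
  have hcfn0 : ∀ z (h1 : α z = none) (h2 : z ∈ pim α), β (cfn z 0) = none := by
    intro z h1 h2
    have hz : α z = none ∧ z ∈ pim α := ⟨h1, h2⟩
    simp only [hcfndef, dif_pos hz]
    exact (hchain z hz.1 hz.2).choose_spec.1
  have hcfnstep : ∀ z (h1 : α z = none) (h2 : z ∈ pim α), ∀ i, i < Dval α z →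
      β (cfn z (i+1)) = some (cfn z i) := by
    intro z h1 h2 i hi
    have hz : α z = none ∧ z ∈ pim α := ⟨h1, h2⟩
    simp only [hcfndef, dif_pos hz]
    exact (hchain z hz.1 hz.2).choose_spec.2 i hi
  -- target cycles in β
  set mfn : ℕ → ℕ := fun n =>
    if h : n ∈ Mset α then (exists_target_cycle hcs h).choose else 1 with hmfndef
  set bfn : ℕ → X := fun n =>
    if h : n ∈ Mset α then (exists_target_cycle hcs h).choose_spec.choose
    else Classical.arbitrary X with hbfndef
  have htprop : ∀ n (h : n ∈ Mset α),
      (1 ≤ mfn n ∧ pit β (mfn n) (bfn n) = some (bfn n) ∧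
        (∀ i, 1 ≤ i → i < mfn n → pit β i (bfn n) ≠ some (bfn n))) ∧ mfn n ∣ n := by
    intro n h
    simp only [hmfndef, hbfndef, dif_pos h]
    exact (exists_target_cycle hcs h).choose_spec.choose_spec
  -- the conjugator
  set Phi : PT X := fun x =>
    if x ∈ pspan α then
      if Dies α x then
        some (cfn (RootOf' α x) (DTime' α x))
      else
        pit β (phase' α (CPT' α x) + (mfn (MinP' α (CPT' α x)) - 1) * K0' α x)
          (bfn (MinP' α (CPT' α x)))
    else none with hPhidef
  -- MinP' of a CPT is a cycle length of α
  have hMmem : ∀ x (h : ¬ Dies α x), MinP' α (CPT' α x) ∈ Mset α := by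
    intro x h
    rw [CPT'_eq h, minP'_eq (cpt_spec h).2]
    exact minp_hasCycle _
  have hPhiSome : ∀ x, x ∈ pspan α → Phi x ≠ none := by
    intro x hx
    rw [hPhidef]
    simp only [if_pos hx]
    by_cases hd : Dies α x
    · rw [if_pos hd]; simp
    · rw [if_neg hd]
      have hM := hMmem x hd
      obtain ⟨⟨hm1, hmb, _⟩, _⟩ := htprop _ hM
      exact periodic_all_defined ⟨mfn _, hm1, hmb⟩ _
  refine ⟨Phi, fun y hy => hPhiSome y (Or.inr hy), ?_⟩
  funext x
  show (α x).bind Phi = (Phi x).bind β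
  by_cases hx : x ∈ pspan α
  · cases hax : α x with
    | none =>
        -- x is a terminal vertex of its (dying) component
        have hdx : Dies α x := ⟨1, by rw [pit_one]; exact hax⟩
        have hxim : x ∈ pim α := by
          rcases hx with hd | hi
          · exact absurd hax hd
          · exact hi
        obtain ⟨hd0, hr0⟩ := dtime_zero_of_terminal hax hdx
        rw [Option.bind_none, hPhidef]
        simp only [if_pos hx, if_pos hdx]
        rw [Option.bind_some, RootOf'_eq hdx, DTime'_eq hdx, hd0, hr0]
        exact (hcfn0 x hax hxim).symm
    | some y =>
        have hyspan : y ∈ pspan α := Or.inr ⟨x, hax⟩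
        rw [Option.bind_some]
        by_cases hdx : Dies α x
        · -- dying case
          have hdy : Dies α y := dies_image hax hdx
          obtain ⟨hdt, hrt⟩ := dtime_step hax hdx hdy
          set z := RootOf α y hdy with hzdef
          have hzn : α z = none := rootOf_none hdy
          have hzim : z ∈ pim α := rootOf_im hyspan hdy
          have hDle : DTime α y hdy + 1 ≤ Dval α z := by
            apply le_Dval
            exact ⟨x, hx, hdx, by rw [hrt], hdt⟩
          rw [hPhidef]
          simp only [if_pos hx, if_pos hdx, if_pos hyspan, if_pos hdy]
          rw [Option.bind_some, RootOf'_eq hdx, DTime'_eq hdx,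
            RootOf'_eq hdy, DTime'_eq hdy, hrt, hdt, ← hzdef]
          exact (hcfnstep z hzn hzim (DTime α y hdy) (by omega)).symm
        · -- cyclic case
          have hdy : ¬ Dies α y := fun d => hdx (dies_of_image hax d)
          have hM := hMmem x hdx
          obtain ⟨⟨hm1, hmb, _⟩, hmdvd⟩ := htprop _ hM
          set M := MinP' α (CPT' α x) with hMdef
          set m := mfn M with hmdef
          set b := bfn M with hbdef
          -- M is the same for y
          have hMy : MinP' α (CPT' α y) = M := by
            rcases k0_step hax hdx hdy with ⟨_, _, hper, harc⟩ | ⟨_, hceq⟩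
            · rw [hMdef, CPT'_eq hdx, CPT'_eq hdy, minP'_eq (cpt_spec hdy).2,
                minP'_eq (cpt_spec hdx).2]
              exact minp_image (cpt_spec hdx).2 (by rw [← CPT'_eq hdx, ← CPT'_eq hdy] at harc; rw [CPT'_eq hdx, CPT'_eq hdy] at harc; exact harc) (cpt_spec hdy).2
            · rw [hMdef, CPT'_eq hdx, CPT'_eq hdy, hceq]
          -- the exponents
          set Ex := phase' α (CPT' α x) + (m - 1) * K0' α x with hExdef
          set Ey := phase' α (CPT' α y) + (m - 1) * K0' α y with hEydef
          have hcong : Ey ≡ Ex + 1 [MOD m] := by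
            rcases k0_step hax hdx hdy with ⟨hK0x, hK0y, hper, harc⟩ | ⟨hKK, hceq⟩
            · -- on the cycle: phases shift by one
              have hphase := phase_step (cpt_spec hdx).2 harc (cpt_spec hdy).2
              have hphase' : phase' α (CPT' α y) ≡ phase' α (CPT' α x) + 1
                  [MOD MinP α (CPT α x hdx) (cpt_spec hdx).2] := by
                rw [CPT'_eq hdx, CPT'_eq hdy, phase'_eq (cpt_spec hdx).2,
                  phase'_eq (cpt_spec hdy).2]
                exact hphase
              have hdvdM : m ∣ MinP α (CPT α x hdx) (cpt_spec hdx).2 := by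
                have hMM : M = MinP α (CPT α x hdx) (cpt_spec hdx).2 := by
                  rw [hMdef, CPT'_eq hdx, minP'_eq (cpt_spec hdx).2]
                rw [← hMM]
                exact hmdvd
              have := Nat.ModEq.of_dvd hdvdM hphase'
              rw [hExdef, hEydef, K0'_eq hdx, K0'_eq hdy, hK0x, hK0y]
              simpa using this
            · -- approaching the cycle: K0 decreases by one
              have hceq' : CPT' α y = CPT' α x := by
                rw [CPT'_eq hdx, CPT'_eq hdy, hceq]
              have hKK' : K0' α x = K0' α y + 1 := by
                rw [K0'_eq hdx, K0'_eq hdy, hKK]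
              have heq : Ex + 1 = Ey + m := by
                rw [hExdef, hEydef, hceq', hKK']
                have : (m - 1) * (K0' α y + 1) = (m-1) * K0' α y + (m-1) := by ring
                rw [this]
                omega
              show Ey % m = (Ex + 1) % m
              rw [heq]
              exact (Nat.add_mod_right _ _).symm
          -- both sides are iterates of β at b
          have hby : bfn (MinP' α (CPT' α y)) = b := by rw [hMy]
          have hstep : (pit β Ex b).bind β = pit β (Ex + 1) b := (pit_succ β Ex b).symm
          rw [hPhidef]
          simp only [if_pos hx, if_neg hdx, if_pos hyspan, if_neg hdy]
          rw [hMy]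
          show pit β Ey b = (pit β Ex b).bind β
          rw [hstep]
          exact pit_mod hm1 hmb hcong
  · -- x outside the span of α
    have hax : α x = none := by
      cases hax : α x with
      | none => rfl
      | some y => exact absurd (Or.inl (show α x ≠ none by rw [hax]; simp)) hx
    rw [hax, Option.bind_none, hPhidef]
    simp only [if_neg hx]
    rfl

theorem conjP_iff_cs_and_s' [Finite X] [Nonempty X] (α β : PT X) :
    ConjP α β ↔ cs α = cs β ∧ sVal α = sVal β := by
  constructor
  · exact conj_forward
  · rintro ⟨hcs, hs⟩
    by_cases hα : α = pzero
    · by_cases hβ : β = pzero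
      · subst hα; subst hβ; exact conjP_self_pzero
      · exfalso
        subst hα
        rw [cs_pzero] at hcs
        rw [sVal_pzero] at hs
        rcases nonzero_invariant hβ with ⟨n, hn⟩ | hpos
        · rw [← hcs] at hn; exact hn
        · rw [← hs] at hpos; exact absurd hpos (lt_irrefl 0)
    · by_cases hβ : β = pzero
      · exfalso
        subst hβ
        rw [cs_pzero] at hcs
        rw [sVal_pzero] at hs
        rcases nonzero_invariant hα with ⟨n, hn⟩ | hpos
        · rw [hcs] at hn; exact hn
        · rw [hs] at hpos; exact absurd hpos (lt_irrefl 0)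
      · obtain ⟨φ, hφdom, hφeq⟩ := exists_semiconj hcs hs
        obtain ⟨ψ, hψdom, hψeq⟩ := exists_semiconj hcs.symm hs.symm
        exact ⟨φ, mem_Pfrak1P_of_dom hα hφdom, ψ, mem_Pfrak1P_of_dom hβ hψdom,
          hφeq, hψeq⟩


/-- Corollary 5.6. For a finite nonempty set `X` and `α, β ∈ P(X)`:
`α ~c β` iff `cs(α) = cs(β)` and `s(α) = s(β)`. -/
theorem conjP_iff_cs_and_s [Finite X] [Nonempty X] (α β : PT X) :
    ConjP α β ↔ cs α = cs β ∧ sVal α = sVal β :=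
  conjP_iff_cs_and_s' α β

end ConjPaper
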